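/- Let F be a pure ordered FFKP of m factors for prime a, with N^{(m)}_k rows of type (a,k) for each k ≤ k_m, and let F' = F_{a^{k_{m+1}}} ⊗ F with k_{m+1} ≥ k_m. Then: the number of type-(a,0) rows of F' equals N^{(m)}_0; for 1 ≤ k ≤ k_m the number of type-(a,k) rows of F' equals a^{k-1}(a-1)·(N^{(m)}_0 + ⋯ + N^{(m)}_{k-1}) + a^k·N^{(m)}_k; and for k_m < l ≤ k_{m+1} the number of type-(a,l) rows of F' equals a^{l-1}(a-1)·a^{k_1+⋯+k_m}. -/

import Mathlib

open Matrix

/-- The unitary Fourier matrix of size `n` (0-based indexing):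
`[F_n]_{i,j} = (1/√n)·exp(2πi·i·j/n)`. -/
noncomputable def Fourier (n : ℕ) : Matrix (Fin n) (Fin n) ℂ :=
  Matrix.of fun i j =>
    ((1 / Real.sqrt n : ℝ) : ℂ) *
      Complex.exp (2 * Real.pi * Complex.I * ((i : ℕ) : ℂ) * ((j : ℕ) : ℂ) / n)

/-- Kronecker product of square complex matrices, realized on `Fin (m * n)`. -/
noncomputable def kron {m n : ℕ} (A : Matrix (Fin m) (Fin m) ℂ)
    (B : Matrix (Fin n) (Fin n) ℂ) : Matrix (Fin (m * n)) (Fin (m * n)) ℂ :=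
  Matrix.of fun i j =>
    A (finProdFinEquiv.symm i).1 (finProdFinEquiv.symm j).1 *
      B (finProdFinEquiv.symm i).2 (finProdFinEquiv.symm j).2

/-- Kronecker product of row vectors. -/
noncomputable def kronVec {m n : ℕ} (v : Fin m → ℂ) (w : Fin n → ℂ) : Fin (m * n) → ℂ :=
  fun i => v (finProdFinEquiv.symm i).1 * w (finProdFinEquiv.symm i).2

/-- Kronecker product of the Fourier matrices of the sizes in the list `L`. -/
noncomputable def kronFourier : (L : List ℕ) → Matrix (Fin L.prod) (Fin L.prod) ℂ
  | [] => 1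
  | n :: t => kron (Fourier n) (kronFourier t)

open Classical in
/-- `v` is a row of length `N` whose entries are `(1/√N)` times the `n`-th roots of
unity, each occurring `N / n` times. -/
def RowVals (N n : ℕ) (v : Fin N → ℂ) : Prop :=
  ∀ t : Fin n,
    (Finset.univ.filter fun j =>
      v j = ((1 / Real.sqrt N : ℝ) : ℂ) *
        Complex.exp (2 * Real.pi * Complex.I * ((t : ℕ) : ℂ) / n)).card = N / n

open Classical in
/-- Number of rows of the square matrix `M` that are of "type `n`", i.e. consist of
`(1/√N)` times the `n`-th roots of unity, each occurring equally often. -/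
noncomputable def countRows (N n : ℕ) (M : Matrix (Fin N) (Fin N) ℂ) : ℕ :=
  (Finset.univ.filter fun i : Fin N => RowVals N n (M i)).card

/-- `P` is a permutation matrix. -/
def IsPermMatrix {α : Type*} [DecidableEq α] (P : Matrix α α ℂ) : Prop :=
  ∃ σ : Equiv.Perm α, ∀ i j, P i j = if σ j = i then (1 : ℂ) else 0

/-- `D` is a unitary diagonal matrix. -/
def IsUnitaryDiag {α : Type*} [DecidableEq α] (D : Matrix α α ℂ) : Prop :=
  ∃ d : α → ℂ, (∀ i, ‖d i‖ = 1) ∧ D = Matrix.diagonal d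

-- ============ toolkit ============
open Finset

noncomputable def eN (n : ℕ) (x : ℤ) : ℂ := Complex.exp (2 * Real.pi * Complex.I * x / n)

noncomputable def cC (N : ℕ) : ℂ := ((1 / Real.sqrt N : ℝ) : ℂ)

open Classical in
/-- Classical count of elements satisfying a predicate. -/
noncomputable def NC {α : Type*} [Fintype α] (p : α → Prop) : ℕ :=
  (Finset.univ.filter p).card

lemma NC_eq {α : Type*} [Fintype α] (p : α → Prop) [DecidablePred p] :
    (Finset.univ.filter p).card = NC p := by
  rw [NC]
  congr 1
  ext a
  simp only [Finset.mem_filter]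

lemma NC_congr {α : Type*} [Fintype α] {p q : α → Prop} (h : ∀ a, p a ↔ q a) :
    NC p = NC q := by
  rw [NC, NC]
  congr 1
  ext a
  simp only [Finset.mem_filter]
  rw [h a]

lemma two_pi_I_ne : (2 * Real.pi * Complex.I : ℂ) ≠ 0 := by
  simp [Real.pi_ne_zero, Complex.I_ne_zero]

lemma eN_eq_iff {n : ℕ} (hn : n ≠ 0) (x y : ℤ) :
    eN n x = eN n y ↔ (x : ZMod n) = (y : ZMod n) := by
  have hn' : (n : ℂ) ≠ 0 := Nat.cast_ne_zero.mpr hn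
  have hpi : (Real.pi : ℂ) ≠ 0 := Complex.ofReal_ne_zero.mpr Real.pi_ne_zero
  rw [eN, eN, Complex.exp_eq_exp_iff_exists_int, ZMod.intCast_eq_intCast_iff]
  constructor
  · rintro ⟨k, hk⟩
    field_simp at hk
    have h2 : (2*Real.pi*Complex.I) * (x:ℂ) = (2*Real.pi*Complex.I) * ((y:ℂ) + k*n) := by
      linear_combination (2*Real.pi*Complex.I) * hk
    have : (x : ℂ) = y + k * n := mul_left_cancel₀ two_pi_I_ne h2
    have hz : x = y + k * n := by exact_mod_cast this
    exact Int.modEq_iff_dvd.mpr ⟨-k, by linarith⟩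
  · intro h
    obtain ⟨k, hk⟩ := Int.modEq_iff_dvd.mp h
    refine ⟨-k, ?_⟩
    have hxy : (x : ℂ) = y + (-k) * n := by exact_mod_cast (by linarith : x = y + (-k) * n)
    rw [hxy]; field_simp; push_cast; ring

lemma eN_ne_zero (n : ℕ) (x : ℤ) : eN n x ≠ 0 := Complex.exp_ne_zero _

lemma eN_zero (n : ℕ) : eN n 0 = 1 := by simp [eN]

lemma eN_add (n : ℕ) (x y : ℤ) : eN n x * eN n y = eN n (x + y) := by
  rw [eN, eN, eN, ← Complex.exp_add]
  congr 1
  push_cast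
  ring

lemma eN_scale {d g : ℕ} (hg : g ≠ 0) (x : ℤ) : eN (d * g) (x * g) = eN d x := by
  have hg' : (g : ℂ) ≠ 0 := Nat.cast_ne_zero.mpr hg
  rw [eN, eN]
  congr 1
  by_cases hd : d = 0
  · subst hd; simp
  · have hd' : (d : ℂ) ≠ 0 := Nat.cast_ne_zero.mpr hd
    push_cast
    field_simp

lemma eN_inj {n : ℕ} (hn : n ≠ 0) {t t' : ℕ} (ht : t < n) (ht' : t' < n)
    (h : eN n t = eN n t') : t = t' := by
  rw [eN_eq_iff hn] at h
  have h' : ((t : ℕ) : ZMod n) = ((t' : ℕ) : ZMod n) := by exact_mod_cast h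
  have := congrArg ZMod.val h'
  rwa [ZMod.val_cast_of_lt ht, ZMod.val_cast_of_lt ht'] at this

lemma cC_ne_zero {N : ℕ} (hN : N ≠ 0) : cC N ≠ 0 := by
  have : (0:ℝ) < Real.sqrt N := Real.sqrt_pos.mpr (by exact_mod_cast Nat.pos_of_ne_zero hN)
  simp [cC]
  positivity

lemma cC_mul (M N : ℕ) : cC (M * N) = cC M * cC N := by
  rw [cC, cC, cC]
  push_cast
  rw [Real.sqrt_mul (by positivity)]
  push_cast
  rw [one_div, one_div, one_div, mul_inv]

/-- Clean form of `RowVals`. -/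
def RV (N n : ℕ) (v : Fin N → ℂ) : Prop :=
  ∀ t : Fin n, NC (fun j => v j = cC N * eN n ((t : ℕ) : ℤ)) = N / n

open Classical in
lemma rowVals_iff (N n : ℕ) (v : Fin N → ℂ) : RowVals N n v ↔ RV N n v := by
  unfold RowVals RV
  apply forall_congr'
  intro t
  have hpred : ∀ j, (v j = ((1 / Real.sqrt N : ℝ) : ℂ) *
        Complex.exp (2 * Real.pi * Complex.I * ((t : ℕ) : ℂ) / n))
      ↔ (v j = cC N * eN n ((t:ℕ):ℤ)) := by
    intro j
    rw [cC, eN]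
    norm_cast
  rw [NC_eq, NC_congr hpred]

open Classical in
lemma rv_all_vals {N n : ℕ} (hN : N ≠ 0) (hn : n ≠ 0) (hd : n ∣ N) {v : Fin N → ℂ}
    (h : RV N n v) : ∀ j, ∃ t : Fin n, v j = cC N * eN n ((t:ℕ):ℤ) := by
  have hdisj : ∀ t t' : Fin n, t ≠ t' →
      Disjoint (Finset.univ.filter fun j => v j = cC N * eN n ((t:ℕ):ℤ))
        (Finset.univ.filter fun j => v j = cC N * eN n ((t':ℕ):ℤ)) := by
    intro t t' htt
    rw [Finset.disjoint_filter]
    intro j _ hj hj'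
    rw [hj] at hj'
    have := mul_left_cancel₀ (cC_ne_zero hN) hj'
    exact htt (Fin.ext (eN_inj hn t.isLt t'.isLt this))
  have hcard : (Finset.univ.biUnion fun t : Fin n =>
      Finset.univ.filter fun j => v j = cC N * eN n ((t:ℕ):ℤ)).card = N := by
    rw [Finset.card_biUnion (fun t _ t' _ htt => hdisj t t' htt)]
    rw [Finset.sum_congr rfl (fun t _ => (NC_eq _).trans (h t)), Finset.sum_const,
      Finset.card_univ, Fintype.card_fin, smul_eq_mul]
    exact Nat.mul_div_cancel' hd
  have huniv : (Finset.univ.biUnion fun t : Fin n =>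
      Finset.univ.filter fun j => v j = cC N * eN n ((t:ℕ):ℤ)) = Finset.univ := by
    apply Finset.eq_univ_of_card
    rw [hcard, Fintype.card_fin]
  intro j
  have : j ∈ Finset.univ.biUnion fun t : Fin n =>
      Finset.univ.filter fun j => v j = cC N * eN n ((t:ℕ):ℤ) := by
    rw [huniv]; exact Finset.mem_univ j
  obtain ⟨t, _, ht⟩ := Finset.mem_biUnion.mp this
  exact ⟨t, (Finset.mem_filter.mp ht).2⟩

lemma rv_unique {N a : ℕ} (hN : N ≠ 0) (ha : 2 ≤ a) {t s : ℕ} {v : Fin N → ℂ}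
    (hdvd : a ^ t ∣ N) (h1 : RV N (a ^ t) v) (h2 : RV N (a ^ s) v) : s = t := by
  have ha0 : a ≠ 0 := by omega
  have hat : a ^ t ≠ 0 := pow_ne_zero _ ha0
  have has : a ^ s ≠ 0 := pow_ne_zero _ ha0
  by_contra hst
  rcases Nat.lt_or_ge s t with hlt | hge
  · -- s < t : compare counts of the value cC N * 1
    have e1 := h1 ⟨0, Nat.pos_of_ne_zero hat⟩
    have e2 := h2 ⟨0, Nat.pos_of_ne_zero has⟩
    simp only [Fin.val_mk, Nat.cast_zero, eN_zero] at e1 e2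
    rw [e1] at e2
    obtain ⟨m, hm⟩ := hdvd
    have hm0 : m ≠ 0 := by rintro rfl; rw [mul_zero] at hm; exact hN hm
    have ht' : N / a ^ t = m := by rw [hm, Nat.mul_div_cancel_left _ (Nat.pos_of_ne_zero hat)]
    have hs' : N / a ^ s = a ^ (t - s) * m := by
      have : N = a ^ s * (a ^ (t - s) * m) := by
        rw [hm, ← mul_assoc, ← pow_add]
        congr 2
        omega
      rw [this, Nat.mul_div_cancel_left _ (Nat.pos_of_ne_zero has)]
    rw [ht', hs'] at e2
    have h2c : 2 ≤ a ^ (t - s) := le_trans ha (Nat.le_self_pow (by omega) a)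
    have h2m : 2 * m ≤ a ^ (t - s) * m := Nat.mul_le_mul_right m h2c
    omega
  · -- t < s
    have hlt : t < s := by omega
    by_cases hz : N / a ^ s = 0
    · have e1 := h1 ⟨0, Nat.pos_of_ne_zero hat⟩
      have e2 := h2 ⟨0, Nat.pos_of_ne_zero has⟩
      simp only [Fin.val_mk, Nat.cast_zero, eN_zero] at e1 e2
      rw [e1] at e2
      have : N / a ^ t ≠ 0 := by
        have := Nat.div_pos (Nat.le_of_dvd (Nat.pos_of_ne_zero hN) hdvd) (Nat.pos_of_ne_zero hat)
        omega
      omega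
    · -- the value e^{2πi/a^s} is attained, but is not an (a^t)-th root
      have hs1 : 1 < a ^ s := by
        calc 1 < a := by omega
        _ ≤ a ^ s := Nat.le_self_pow (by omega) a
      have e2 := h2 ⟨1, hs1⟩
      classical
      have hne : (Finset.univ.filter fun j =>
          v j = cC N * eN (a^s) (((⟨1, hs1⟩ : Fin (a^s)) : ℕ) : ℤ)).Nonempty := by
        rw [← Finset.card_pos, NC_eq, e2]
        exact Nat.pos_of_ne_zero hz
      obtain ⟨j, hj⟩ := hne
      have hj' := (Finset.mem_filter.mp hj).2
      obtain ⟨u, hu⟩ := rv_all_vals hN hat hdvd h1 j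
      rw [hu] at hj'
      have heq : eN (a^t) ((u : ℕ) : ℤ) = eN (a^s) ((1:ℕ) : ℤ) := by
        have := mul_left_cancel₀ (cC_ne_zero hN) hj'
        rw [this]
      have hsc : eN (a^s) (((u:ℕ) : ℤ) * (a^(s-t) : ℕ)) = eN (a^t) ((u:ℕ) : ℤ) := by
        have hpow : a ^ t * a ^ (s - t) = a ^ s := by
          rw [← pow_add]; congr 1; omega
        calc eN (a^s) (((u:ℕ):ℤ) * (a^(s-t) : ℕ))
            = eN (a^t * a^(s-t)) (((u:ℕ):ℤ) * (a^(s-t) : ℕ)) := by rw [hpow]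
          _ = eN (a^t) ((u:ℕ):ℤ) := eN_scale (pow_ne_zero _ ha0) _
      rw [← hsc, eN_eq_iff has] at heq
      have hdvd_as : (a : ℕ) ∣ a ^ s := dvd_pow_self a (by omega)
      have hmap := congrArg (ZMod.castHom hdvd_as (ZMod a)) heq
      rw [map_intCast, map_intCast] at hmap
      push_cast at hmap
      have hzero : ((a : ZMod a))^(s-t) = 0 := by
        rw [ZMod.natCast_self, zero_pow (by omega)]
      rw [hzero, mul_zero] at hmap
      have h10 : ((1:ℕ) : ZMod a) = 0 := by exact_mod_cast hmap.symm
      rw [ZMod.natCast_eq_zero_iff] at h10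
      have := Nat.le_of_dvd one_pos h10
      omega

open Classical in
lemma NC_fiber {G H : Type*} [AddGroup G] [Fintype G] [AddGroup H] [Fintype H]
    (f : G →+ H) (hf : Function.Surjective f) (c : H) :
    NC (fun x : G => f x = c) = Fintype.card G / Fintype.card H := by
  have key : ∀ c : H, NC (fun x : G => f x = c) = NC (fun x : G => f x = 0) := by
    intro c
    obtain ⟨x₀, hx₀⟩ := hf c
    rw [NC, NC]
    refine Finset.card_nbij' (i := fun x => x - x₀) (j := fun x => x + x₀) ?_ ?_ ?_ ?_
    · intro x hx
      simp only [Finset.coe_filter, Finset.mem_coe, Finset.mem_filter, Set.mem_setOf_eq, Finset.mem_univ, true_and] at hx ⊢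
      simp [map_sub, hx, hx₀]
    · intro x hx
      simp only [Finset.coe_filter, Finset.mem_coe, Finset.mem_filter, Set.mem_setOf_eq, Finset.mem_univ, true_and] at hx ⊢
      simp [map_add, hx, hx₀]
    · intro x _; simp
    · intro x _; simp
  have tot : Fintype.card G = Fintype.card H * NC (fun x : G => f x = 0) := by
    have h0 := Finset.card_eq_sum_card_fiberwise
      (f := f) (s := (univ : Finset G)) (t := (univ : Finset H)) (fun x _ => mem_univ _)
    rw [card_univ] at h0
    rw [h0, Finset.sum_congr rfl (fun c _ => (NC_eq _).trans (key c)), sum_const,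
      card_univ, smul_eq_mul]
  rw [key c, tot, Nat.mul_div_cancel_left]
  exact Fintype.card_pos

lemma NC_equiv {α β : Type*} [Fintype α] [Fintype β] (e : α ≃ β) (p : β → Prop) :
    NC (fun a => p (e a)) = NC p := by
  rw [NC, NC]
  refine Finset.card_nbij' (i := fun a => e a) (j := fun b => e.symm b) ?_ ?_ ?_ ?_
  · intro a ha; simp only [Finset.coe_filter, Finset.mem_coe, Finset.mem_filter, Set.mem_setOf_eq, Finset.mem_univ, true_and] at ha ⊢; exact ha
  · intro b hb; simp only [Finset.coe_filter, Finset.mem_coe, Finset.mem_filter, Set.mem_setOf_eq, Finset.mem_univ, true_and] at hb ⊢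
    rw [e.apply_symm_apply]; exact hb
  · intro a _; exact e.symm_apply_apply a
  · intro b _; exact e.apply_symm_apply b

open Classical in
lemma NC_prod {α β : Type*} [Fintype α] [Fintype β] (P : α → β → Prop) :
    NC (fun p : α × β => P p.1 p.2) = ∑ x : α, NC (fun y => P x y) := by
  rw [NC, Finset.card_filter, Fintype.sum_prod_type]
  exact Finset.sum_congr rfl fun x _ => (Finset.card_filter _ _).symm.trans (NC_eq _)

open Classical in
lemma sum_comp_group {α : Type*} [Fintype α] (θ : α → ℕ) (B : ℕ) (hθ : ∀ x, θ x < B)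
    (f : ℕ → ℕ) :
    ∑ x : α, f (θ x) = ∑ j ∈ Finset.range B, NC (fun x => θ x = j) * f j := by
  rw [← Finset.sum_fiberwise_of_maps_to (g := θ) (fun x _ => Finset.mem_range.mpr (hθ x))]
  refine Finset.sum_congr rfl fun j _ => ?_
  rw [Finset.sum_congr rfl (fun x hx => by
    rw [(Finset.mem_filter.mp hx).2]), Finset.sum_const, smul_eq_mul, NC_eq]

open Classical in
lemma NC_partition {α : Type*} [Fintype α] (θ : α → ℕ) (B : ℕ) (hθ : ∀ x, θ x < B) :
    ∑ j ∈ Finset.range B, NC (fun x => θ x = j) = Fintype.card α := by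
  have h0 := Finset.card_eq_sum_card_fiberwise
    (f := θ) (s := (univ : Finset α)) (t := Finset.range B)
    (fun x _ => Finset.mem_range.mpr (hθ x))
  rw [card_univ] at h0
  calc ∑ j ∈ Finset.range B, NC (fun x => θ x = j)
      = ∑ j ∈ Finset.range B, (univ.filter fun x => θ x = j).card :=
        Finset.sum_congr rfl (fun j _ => (NC_eq _).symm)
    _ = Fintype.card α := h0.symm

def finZModEquiv (n : ℕ) (hn : n ≠ 0) : Fin n ≃ ZMod n :=
  haveI : NeZero n := ⟨hn⟩
  { toFun := fun j => ((j : ℕ) : ZMod n)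
    invFun := fun x => ⟨x.val, x.val_lt⟩
    left_inv := fun j => by ext; exact ZMod.val_cast_of_lt j.isLt
    right_inv := fun x => ZMod.natCast_rightInverse x }

lemma NC_fin_fiber {n : ℕ} (hn : n ≠ 0) {H : Type*} [AddCommGroup H] [Fintype H]
    (f : ZMod n →+ H) (hf : Function.Surjective f) (c : H) :
    NC (fun j : Fin n => f ((j : ℕ) : ZMod n) = c) = n / Fintype.card H := by
  haveI : NeZero n := ⟨hn⟩
  have h1 : NC (fun j : Fin n => f ((j : ℕ) : ZMod n) = c)
      = NC (fun x : ZMod n => f x = c) := NC_equiv (finZModEquiv n hn) (fun x => f x = c)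
  rw [h1, NC_fiber f hf c, ZMod.card]

/-- counting multiples: `#{j < n : (j : ZMod d) = c} = n / d` when `d ∣ n`. -/
lemma NC_fin_mod {n d : ℕ} (hn : n ≠ 0) (hd0 : d ≠ 0) (hd : d ∣ n) (c : ZMod d) :
    NC (fun j : Fin n => ((j : ℕ) : ZMod d) = c) = n / d := by
  haveI : NeZero n := ⟨hn⟩
  haveI : NeZero d := ⟨hd0⟩
  set f := (ZMod.castHom hd (ZMod d)).toAddMonoidHom with hfdef
  have hfa : ∀ x : ZMod n, f x = ZMod.castHom hd (ZMod d) x := fun _ => rfl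
  have hsurj : Function.Surjective f := by
    intro z
    exact ⟨((z.val : ℕ) : ZMod n), by
      rw [hfa, map_natCast]; exact ZMod.natCast_rightInverse z⟩
  have h2 : NC (fun j : Fin n => ((j : ℕ) : ZMod d) = c)
      = NC (fun j : Fin n => f ((j : ℕ) : ZMod n) = c) :=
    NC_congr (fun j => by rw [hfa, map_natCast])
  rw [h2, NC_fin_fiber hn f hsurj c, ZMod.card]

lemma fourier_row {n : ℕ} (hn : n ≠ 0) (r : Fin n) :
    RV n (n / Nat.gcd (r : ℕ) n) (Fourier n r) := by
  set g := Nat.gcd (r : ℕ) n with hg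
  set d := n / g with hd
  have hnpos : 0 < n := Nat.pos_of_ne_zero hn
  have hg0 : 0 < g := Nat.gcd_pos_of_pos_right _ hnpos
  have hdg : d * g = n := Nat.div_mul_cancel (Nat.gcd_dvd_right _ _)
  have hd0 : d ≠ 0 := by
    intro h; rw [h, zero_mul] at hdg; omega
  set r' := (r : ℕ) / g with hr'
  have hrg : r' * g = (r : ℕ) := Nat.div_mul_cancel (Nat.gcd_dvd_left _ _)
  have cop : Nat.Coprime r' d := Nat.coprime_div_gcd_div_gcd hg0
  have hFour : ∀ j : Fin n, Fourier n r j = cC n * eN n (((r : ℕ) * (j : ℕ) : ℕ) : ℤ) := by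
    intro j
    rw [Fourier, Matrix.of_apply, cC, eN]
    congr 2
    push_cast
    ring
  intro t
  have hcond : ∀ j : Fin n,
      (Fourier n r j = cC n * eN d ((t : ℕ) : ℤ))
        ↔ ((r' : ZMod d) * (((j : ℕ) : ZMod d)) = ((t : ℕ) : ZMod d)) := by
    intro j
    rw [hFour j]
    constructor
    · intro h
      have h1 : eN n (((r : ℕ) * (j : ℕ) : ℕ) : ℤ) = eN d ((t : ℕ) : ℤ) :=
        mul_left_cancel₀ (cC_ne_zero hn) h
      rw [show eN d ((t : ℕ) : ℤ) = eN (d * g) (((t:ℕ) : ℤ) * (g : ℕ)) from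
        (eN_scale (by omega) _).symm, hdg, eN_eq_iff hn] at h1
      rw [ZMod.intCast_eq_intCast_iff] at h1
      obtain ⟨k, hk⟩ := Int.modEq_iff_dvd.mp h1
      have hdvd' : (d : ℤ) ∣ ((t : ℕ) : ℤ) - (r' : ℤ) * ((j : ℕ) : ℤ) := by
        refine ⟨k, ?_⟩
        have hgz : (g : ℤ) ≠ 0 := by exact_mod_cast hg0.ne'
        apply mul_left_cancel₀ hgz
        push_cast [← hrg, ← hdg] at hk ⊢
        linarith
      have h3 := Int.modEq_iff_dvd.mpr hdvd'
      rw [← ZMod.intCast_eq_intCast_iff] at h3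
      push_cast at h3
      exact h3
    · intro h
      congr 1
      rw [show eN d ((t : ℕ) : ℤ) = eN (d * g) (((t:ℕ) : ℤ) * (g : ℕ)) from
        (eN_scale (by omega) _).symm, hdg, eN_eq_iff hn]
      rw [ZMod.intCast_eq_intCast_iff]
      apply Int.modEq_iff_dvd.mpr
      have h' : (((r' * (j:ℕ) : ℕ) : ℤ) : ZMod d) = (((t:ℕ) : ℤ) : ZMod d) := by
        push_cast
        exact_mod_cast h
      rw [ZMod.intCast_eq_intCast_iff] at h'
      obtain ⟨k, hk⟩ := Int.modEq_iff_dvd.mp h'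
      refine ⟨k, ?_⟩
      push_cast [← hrg, ← hdg] at hk ⊢
      linear_combination (g : ℤ) * hk
  rw [NC_congr hcond]
  haveI : NeZero n := ⟨hn⟩
  haveI : NeZero d := ⟨hd0⟩
  have hddvd : d ∣ n := Nat.div_dvd_of_dvd (Nat.gcd_dvd_right _ _)
  set ch := ZMod.castHom hddvd (ZMod d) with hch
  set f : ZMod n →+ ZMod d :=
    (AddMonoidHom.mulLeft ((r' : ZMod d))).comp ch.toAddMonoidHom with hfdef
  have hfa : ∀ x : ZMod n, f x = (r' : ZMod d) * ch x := fun _ => rfl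
  have hchsurj : Function.Surjective ch := by
    intro z
    exact ⟨((z.val : ℕ) : ZMod n), by rw [hch, map_natCast]; exact ZMod.natCast_rightInverse z⟩
  have hfsurj : Function.Surjective f := by
    intro y
    set u := ZMod.unitOfCoprime r' cop with hu
    obtain ⟨x, hx⟩ := hchsurj (((u⁻¹ : (ZMod d)ˣ) : ZMod d) * y)
    refine ⟨x, ?_⟩
    rw [hfa, hx]
    have hru : (r' : ZMod d) = (u : ZMod d) := rfl
    rw [hru, ← mul_assoc, Units.mul_inv, one_mul]
  have h4 : NC (fun j : Fin n => (r' : ZMod d) * (((j:ℕ)) : ZMod d) = ((t:ℕ) : ZMod d))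
      = NC (fun j : Fin n => f ((j:ℕ) : ZMod n) = ((t:ℕ) : ZMod d)) :=
    NC_congr (fun j => by rw [hfa, hch, map_natCast])
  rw [h4, NC_fin_fiber hn f hfsurj _, ZMod.card]

open Classical in
lemma NC_comp {α β : Type*} [Fintype α] [Fintype β] (θ : α → β) (C : β → Prop) :
    NC (fun x => C (θ x)) = ∑ b : β, if C b then NC (fun x => θ x = b) else 0 := by
  rw [NC, Finset.card_filter]
  have h1 : ∀ x : α, (if C (θ x) then 1 else 0)
      = ∑ b : β, if θ x = b then (if C b then 1 else 0) else 0 := by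
    intro x
    rw [Finset.sum_ite_eq (Finset.univ) (θ x) (fun b => if C b then 1 else 0)]
    simp
  rw [Finset.sum_congr rfl (fun x _ => h1 x), Finset.sum_comm]
  refine Finset.sum_congr rfl fun b _ => ?_
  by_cases hC : C b
  · simp only [hC, if_true]
    rw [← Finset.card_filter, NC_eq]
  · simp [hC]

open Classical in
lemma NC_sum_comp {α β : Type*} [Fintype α] [Fintype β] (θ : α → β) (f : β → ℕ) :
    ∑ x : α, f (θ x) = ∑ b : β, NC (fun x => θ x = b) * f b := by
  rw [← Finset.sum_fiberwise_of_maps_to (g := θ) (fun x _ => Finset.mem_univ (θ x))]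
  refine Finset.sum_congr rfl fun b _ => ?_
  rw [Finset.sum_congr rfl (fun x hx => by
    rw [(Finset.mem_filter.mp hx).2]), Finset.sum_const, smul_eq_mul, NC_eq]

open Classical in
lemma NC_sum_ite {β : Type*} [Fintype β] (C : β → Prop) (c : ℕ) :
    ∑ b : β, (if C b then c else 0) = NC C * c := by
  rw [← Finset.sum_filter, Finset.sum_const, smul_eq_mul, NC_eq]

lemma NC_prod' {α β : Type*} [Fintype α] [Fintype β] (P : α → β → Prop) :
    NC (fun p : α × β => P p.1 p.2) = ∑ y : β, NC (fun x => P x y) := by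
  have h := NC_equiv (Equiv.prodComm β α) (fun p : α × β => P p.1 p.2)
  have h0 : NC (fun a : β × α => P ((Equiv.prodComm β α) a).1 ((Equiv.prodComm β α) a).2)
      = NC (fun a : β × α => P a.2 a.1) := NC_congr (fun a => Iff.rfl)
  rw [← h, h0, NC_prod (fun (y : β) (x : α) => P x y)]

lemma solve_count {a : ℕ} (ha : 2 ≤ a) (p q s : ℕ) (hs : s = max p q) (c : ZMod (a ^ s)) :
    NC (fun pr : Fin (a ^ p) × Fin (a ^ q) =>
        ((pr.1 : ℕ) : ZMod (a ^ s)) * (a : ZMod (a ^ s)) ^ (s - p)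
          + ((pr.2 : ℕ) : ZMod (a ^ s)) * (a : ZMod (a ^ s)) ^ (s - q)
          = c)
      = a ^ (min p q) := by
  have ha0 : a ≠ 0 := by omega
  rcases Nat.le_total p q with hpq | hpq
  · -- s = q ; subst replaces q by s
    have hseq : s = q := by omega
    subst hseq
    rw [min_eq_left hpq]
    rw [NC_prod (fun (x : Fin (a^p)) (y : Fin (a^s)) =>
      ((x : ℕ) : ZMod (a ^ s)) * (a : ZMod (a ^ s)) ^ (s - p)
        + ((y : ℕ) : ZMod (a ^ s)) * (a : ZMod (a ^ s)) ^ (s - s) = c)]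
    have hone : ∀ x : Fin (a ^ p),
        NC (fun y : Fin (a ^ s) => ((x : ℕ) : ZMod (a ^ s)) * (a : ZMod (a ^ s)) ^ (s - p)
          + ((y : ℕ) : ZMod (a ^ s)) * (a : ZMod (a ^ s)) ^ (s - s) = c) = 1 := by
      intro x
      have hcongr : ∀ y : Fin (a ^ s),
          (((x : ℕ) : ZMod (a ^ s)) * (a : ZMod (a ^ s)) ^ (s - p)
            + ((y : ℕ) : ZMod (a ^ s)) * (a : ZMod (a ^ s)) ^ (s - s) = c)
          ↔ (((y : ℕ) : ZMod (a ^ s))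
            = c - ((x : ℕ) : ZMod (a ^ s)) * (a : ZMod (a ^ s)) ^ (s - p)) := by
        intro y
        rw [Nat.sub_self, pow_zero, mul_one]
        constructor
        · intro h; rw [← h]; ring
        · intro h; rw [h]; ring
      rw [NC_congr hcongr, NC_fin_mod (pow_ne_zero _ ha0) (pow_ne_zero _ ha0) dvd_rfl,
        Nat.div_self (Nat.pos_of_ne_zero (pow_ne_zero _ ha0))]
    rw [Finset.sum_congr rfl (fun x _ => hone x), Finset.sum_const, smul_eq_mul,
      Finset.card_univ, Fintype.card_fin, mul_one]
  · -- s = p ; subst replaces p by s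
    have hseq : s = p := by omega
    subst hseq
    rw [min_eq_right hpq]
    rw [NC_prod' (fun (x : Fin (a^s)) (y : Fin (a^q)) =>
      ((x : ℕ) : ZMod (a ^ s)) * (a : ZMod (a ^ s)) ^ (s - s)
        + ((y : ℕ) : ZMod (a ^ s)) * (a : ZMod (a ^ s)) ^ (s - q) = c)]
    have hone : ∀ y : Fin (a ^ q),
        NC (fun x : Fin (a ^ s) => ((x : ℕ) : ZMod (a ^ s)) * (a : ZMod (a ^ s)) ^ (s - s)
          + ((y : ℕ) : ZMod (a ^ s)) * (a : ZMod (a ^ s)) ^ (s - q) = c) = 1 := by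
      intro y
      have hcongr : ∀ x : Fin (a ^ s),
          (((x : ℕ) : ZMod (a ^ s)) * (a : ZMod (a ^ s)) ^ (s - s)
            + ((y : ℕ) : ZMod (a ^ s)) * (a : ZMod (a ^ s)) ^ (s - q) = c)
          ↔ (((x : ℕ) : ZMod (a ^ s))
            = c - ((y : ℕ) : ZMod (a ^ s)) * (a : ZMod (a ^ s)) ^ (s - q)) := by
        intro x
        rw [Nat.sub_self, pow_zero, mul_one]
        constructor
        · intro h; rw [← h]; ring
        · intro h; rw [h]; ring
      rw [NC_congr hcongr, NC_fin_mod (pow_ne_zero _ ha0) (pow_ne_zero _ ha0) dvd_rfl,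
        Nat.div_self (Nat.pos_of_ne_zero (pow_ne_zero _ ha0))]
    rw [Finset.sum_congr rfl (fun y _ => hone y), Finset.sum_const, smul_eq_mul,
      Finset.card_univ, Fintype.card_fin, mul_one]

lemma rv_kron {a M N p q : ℕ} (ha : 2 ≤ a) (hM : M ≠ 0) (hN : N ≠ 0)
    (hp : a ^ p ∣ M) (hq : a ^ q ∣ N) {v : Fin M → ℂ} {w : Fin N → ℂ}
    (hv : RV M (a ^ p) v) (hw : RV N (a ^ q) w) :
    RV (M * N) (a ^ (max p q)) (kronVec v w) := by
  have ha0 : a ≠ 0 := by omega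
  have hMN : M * N ≠ 0 := Nat.mul_ne_zero hM hN
  have hap : a ^ p ≠ 0 := pow_ne_zero _ ha0
  have haq : a ^ q ≠ 0 := pow_ne_zero _ ha0
  have has : a ^ (max p q) ≠ 0 := pow_ne_zero _ ha0
  choose θ1 hθ1 using rv_all_vals hM hap hp hv
  choose θ2 hθ2 using rv_all_vals hN haq hq hw
  have hθ1count : ∀ t1, NC (fun j1 => θ1 j1 = t1) = M / a ^ p := by
    intro t1
    have hiff : ∀ j1, (θ1 j1 = t1) ↔ (v j1 = cC M * eN (a^p) ((t1:ℕ):ℤ)) := by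
      intro j1
      constructor
      · rintro rfl; exact hθ1 j1
      · intro h
        have h2 := (hθ1 j1).symm.trans h
        exact Fin.ext (eN_inj hap (θ1 j1).isLt t1.isLt
          (mul_left_cancel₀ (cC_ne_zero hM) h2))
    rw [NC_congr hiff, hv t1]
  have hθ2count : ∀ t2, NC (fun j2 => θ2 j2 = t2) = N / a ^ q := by
    intro t2
    have hiff : ∀ j2, (θ2 j2 = t2) ↔ (w j2 = cC N * eN (a^q) ((t2:ℕ):ℤ)) := by
      intro j2
      constructor
      · rintro rfl; exact hθ2 j2
      · intro h
        have h2 := (hθ2 j2).symm.trans h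
        exact Fin.ext (eN_inj haq (θ2 j2).isLt t2.isLt
          (mul_left_cancel₀ (cC_ne_zero hN) h2))
    rw [NC_congr hiff, hw t2]
  have hpow1 : a ^ p * a ^ (max p q - p) = a ^ (max p q) := by
    rw [← pow_add]; congr 1; omega
  have hpow2 : a ^ q * a ^ (max p q - q) = a ^ (max p q) := by
    rw [← pow_add]; congr 1; omega
  have hval : ∀ (j1 : Fin M) (j2 : Fin N), v j1 * w j2
      = cC (M * N) * eN (a ^ (max p q))
          (((θ1 j1 : ℕ) : ℤ) * ((a ^ (max p q - p) : ℕ) : ℤ)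
            + ((θ2 j2 : ℕ) : ℤ) * ((a ^ (max p q - q) : ℕ) : ℤ)) := by
    intro j1 j2
    rw [hθ1 j1, hθ2 j2, cC_mul, ← eN_add]
    rw [show eN (a ^ (max p q)) (((θ1 j1 : ℕ) : ℤ) * ((a ^ (max p q - p) : ℕ) : ℤ))
        = eN (a ^ p) ((θ1 j1 : ℕ) : ℤ) from by
      rw [← hpow1]; exact eN_scale (pow_ne_zero _ ha0) _]
    rw [show eN (a ^ (max p q)) (((θ2 j2 : ℕ) : ℤ) * ((a ^ (max p q - q) : ℕ) : ℤ))
        = eN (a ^ q) ((θ2 j2 : ℕ) : ℤ) from by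
      rw [← hpow2]; exact eN_scale (pow_ne_zero _ ha0) _]
    ring
  intro tbar
  -- reduce to pairs
  have hA : NC (fun i : Fin (M * N) =>
        kronVec v w i = cC (M * N) * eN (a ^ (max p q)) ((tbar : ℕ) : ℤ))
      = NC (fun pr : Fin M × Fin N =>
        v pr.1 * w pr.2 = cC (M * N) * eN (a ^ (max p q)) ((tbar : ℕ) : ℤ)) :=
    (NC_congr fun i => Iff.rfl).trans (NC_equiv finProdFinEquiv.symm
      (fun pr : Fin M × Fin N =>
        v pr.1 * w pr.2 = cC (M * N) * eN (a ^ (max p q)) ((tbar : ℕ) : ℤ)))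
  rw [hA]
  -- rewrite the condition via θ's
  have hcond : ∀ pr : Fin M × Fin N,
      (v pr.1 * w pr.2 = cC (M * N) * eN (a ^ (max p q)) ((tbar : ℕ) : ℤ))
        ↔ (((θ1 pr.1 : ℕ) : ZMod (a ^ (max p q))) * (a : ZMod (a ^ (max p q))) ^ (max p q - p)
            + ((θ2 pr.2 : ℕ) : ZMod (a ^ (max p q))) * (a : ZMod (a ^ (max p q))) ^ (max p q - q)
            = ((tbar : ℕ) : ZMod (a ^ (max p q)))) := by
    intro pr
    rw [hval pr.1 pr.2, mul_right_inj' (cC_ne_zero hMN), eN_eq_iff has]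
    constructor
    · intro h
      push_cast at h
      exact_mod_cast h
    · intro h
      push_cast
      exact_mod_cast h
  rw [NC_congr hcond]
  -- count
  rw [NC_prod (fun (j1 : Fin M) (j2 : Fin N) =>
    ((θ1 j1 : ℕ) : ZMod (a ^ (max p q))) * (a : ZMod (a ^ (max p q))) ^ (max p q - p)
      + ((θ2 j2 : ℕ) : ZMod (a ^ (max p q))) * (a : ZMod (a ^ (max p q))) ^ (max p q - q)
      = ((tbar : ℕ) : ZMod (a ^ (max p q))))]
  -- inner counts
  have hinner : ∀ j1 : Fin M,
      NC (fun j2 : Fin N =>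
        ((θ1 j1 : ℕ) : ZMod (a ^ (max p q))) * (a : ZMod (a ^ (max p q))) ^ (max p q - p)
          + ((θ2 j2 : ℕ) : ZMod (a ^ (max p q))) * (a : ZMod (a ^ (max p q))) ^ (max p q - q)
          = ((tbar : ℕ) : ZMod (a ^ (max p q))))
      = NC (fun t2 : Fin (a ^ q) =>
          ((θ1 j1 : ℕ) : ZMod (a ^ (max p q))) * (a : ZMod (a ^ (max p q))) ^ (max p q - p)
            + ((t2 : ℕ) : ZMod (a ^ (max p q))) * (a : ZMod (a ^ (max p q))) ^ (max p q - q)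
            = ((tbar : ℕ) : ZMod (a ^ (max p q)))) * (N / a ^ q) := by
    intro j1
    rw [NC_comp θ2 (fun t2 : Fin (a ^ q) =>
      ((θ1 j1 : ℕ) : ZMod (a ^ (max p q))) * (a : ZMod (a ^ (max p q))) ^ (max p q - p)
        + ((t2 : ℕ) : ZMod (a ^ (max p q))) * (a : ZMod (a ^ (max p q))) ^ (max p q - q)
        = ((tbar : ℕ) : ZMod (a ^ (max p q))))]
    rw [Finset.sum_congr rfl (fun t2 _ => by rw [hθ2count t2]), NC_sum_ite]
  rw [Finset.sum_congr rfl (fun j1 _ => hinner j1)]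
  -- outer sum over θ1
  rw [NC_sum_comp θ1 (fun t1 : Fin (a ^ p) =>
    NC (fun t2 : Fin (a ^ q) =>
        ((t1 : ℕ) : ZMod (a ^ (max p q))) * (a : ZMod (a ^ (max p q))) ^ (max p q - p)
          + ((t2 : ℕ) : ZMod (a ^ (max p q))) * (a : ZMod (a ^ (max p q))) ^ (max p q - q)
          = ((tbar : ℕ) : ZMod (a ^ (max p q)))) * (N / a ^ q))]
  rw [Finset.sum_congr rfl (fun t1 _ => by rw [hθ1count t1])]
  -- pull out constants and use solve_count
  have hsplit : ∑ t1 : Fin (a ^ p), (M / a ^ p) *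
      (NC (fun t2 : Fin (a ^ q) =>
        ((t1 : ℕ) : ZMod (a ^ (max p q))) * (a : ZMod (a ^ (max p q))) ^ (max p q - p)
          + ((t2 : ℕ) : ZMod (a ^ (max p q))) * (a : ZMod (a ^ (max p q))) ^ (max p q - q)
          = ((tbar : ℕ) : ZMod (a ^ (max p q)))) * (N / a ^ q))
      = (M / a ^ p) * (N / a ^ q) * ∑ t1 : Fin (a ^ p),
          NC (fun t2 : Fin (a ^ q) =>
            ((t1 : ℕ) : ZMod (a ^ (max p q))) * (a : ZMod (a ^ (max p q))) ^ (max p q - p)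
              + ((t2 : ℕ) : ZMod (a ^ (max p q))) * (a : ZMod (a ^ (max p q))) ^ (max p q - q)
              = ((tbar : ℕ) : ZMod (a ^ (max p q)))) := by
    rw [Finset.mul_sum]
    exact Finset.sum_congr rfl fun t1 _ => by ring
  rw [hsplit, ← NC_prod (fun (t1 : Fin (a ^ p)) (t2 : Fin (a ^ q)) =>
    ((t1 : ℕ) : ZMod (a ^ (max p q))) * (a : ZMod (a ^ (max p q))) ^ (max p q - p)
      + ((t2 : ℕ) : ZMod (a ^ (max p q))) * (a : ZMod (a ^ (max p q))) ^ (max p q - q)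
      = ((tbar : ℕ) : ZMod (a ^ (max p q)))),
    solve_count ha p q (max p q) rfl]
  -- final arithmetic
  obtain ⟨m1, hm1⟩ := hp
  obtain ⟨m2, hm2⟩ := hq
  have hm1' : M / a ^ p = m1 := by rw [hm1, Nat.mul_div_cancel_left _ (Nat.pos_of_ne_zero hap)]
  have hm2' : N / a ^ q = m2 := by rw [hm2, Nat.mul_div_cancel_left _ (Nat.pos_of_ne_zero haq)]
  have hMNdiv : M * N / a ^ (max p q) = a ^ (min p q) * (m1 * m2) := by
    have hpq2 : a ^ (max p q) * a ^ (min p q) = a ^ p * a ^ q := by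
      rw [← pow_add, ← pow_add]
      congr 1
      omega
    have hMNeq : M * N = a ^ (max p q) * (a ^ (min p q) * (m1 * m2)) := by
      rw [hm1, hm2]
      calc a ^ p * m1 * (a ^ q * m2) = (a ^ p * a ^ q) * (m1 * m2) := by ring
        _ = (a ^ (max p q) * a ^ (min p q)) * (m1 * m2) := by rw [hpq2]
        _ = a ^ (max p q) * (a ^ (min p q) * (m1 * m2)) := by ring
    rw [hMNeq, Nat.mul_div_cancel_left _ (Nat.pos_of_ne_zero has)]
  rw [hm1', hm2', hMNdiv]
  ring

open Classical in
lemma NC_false {α : Type*} [Fintype α] : NC (fun _ : α => False) = 0 := by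
  rw [NC]; simp

open Classical in
lemma NC_true {α : Type*} [Fintype α] : NC (fun _ : α => True) = Fintype.card α := by
  rw [NC]; simp

open Classical in
lemma NC_add {α : Type*} [Fintype α] (p q : α → Prop) (h : ∀ x, ¬(p x ∧ q x)) :
    NC (fun x => p x ∨ q x) = NC p + NC q := by
  classical
  rw [← NC_eq (fun x => p x ∨ q x), ← NC_eq p, ← NC_eq q]
  have hsplit : (Finset.univ.filter fun x => p x ∨ q x)
      = (Finset.univ.filter p) ∪ (Finset.univ.filter q) := by
    ext x
    simp only [Finset.mem_filter, Finset.mem_union, Finset.mem_univ, true_and]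
  rw [hsplit, Finset.card_union_of_disjoint]
  rw [Finset.disjoint_left]
  intro x hx hx'
  exact h x ⟨(Finset.mem_filter.mp hx).2, (Finset.mem_filter.mp hx').2⟩

open Classical in
lemma NC_lt_sum {α : Type*} [Fintype α] (θ : α → ℕ) (t : ℕ) :
    NC (fun x => θ x < t) = ∑ j ∈ Finset.range t, NC (fun x => θ x = j) := by
  classical
  rw [← NC_eq (fun x => θ x < t), Finset.card_eq_sum_card_fiberwise (f := θ)
    (t := Finset.range t) (fun x hx => Finset.mem_range.mpr (Finset.mem_filter.mp hx).2)]
  refine Finset.sum_congr rfl fun j hj => ?_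
  have hjt : j < t := Finset.mem_range.mp hj
  rw [Finset.filter_filter, NC_eq]
  exact NC_congr fun x => by
    constructor
    · rintro ⟨_, h2⟩; exact h2
    · intro h2; exact ⟨by omega, h2⟩

lemma prod_map_pow (a : ℕ) (L : List ℕ) : (L.map (a ^ ·)).prod = a ^ L.sum := by
  induction L with
  | nil => simp
  | cons k L ih => simp [pow_add, ih]

lemma foldr_max_le_sum (L : List ℕ) : L.foldr max 0 ≤ L.sum := by
  induction L with
  | nil => simp
  | cons k L ih =>
    simp only [List.foldr_cons, List.sum_cons]
    omega

lemma countRows_eq_NC (Nn n : ℕ) (M : Matrix (Fin Nn) (Fin Nn) ℂ) :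
    countRows Nn n M = NC (fun i => RV Nn n (M i)) := by
  rw [countRows, NC_eq]
  exact NC_congr fun i => rowVals_iff Nn n (M i)

lemma fourier_row_pow {a K : ℕ} (ha : a.Prime) (r : Fin (a ^ K)) :
    ∃ e, e ≤ K ∧ RV (a ^ K) (a ^ e) (Fourier (a ^ K) r) := by
  have h := fourier_row (pow_ne_zero K ha.ne_zero) r
  have hdvd : (a ^ K / Nat.gcd (r : ℕ) (a ^ K)) ∣ a ^ K :=
    Nat.div_dvd_of_dvd (Nat.gcd_dvd_right _ _)
  obtain ⟨e, he, heq⟩ := (Nat.dvd_prime_pow ha).mp hdvd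
  rw [heq] at h
  exact ⟨e, he, h⟩

lemma rv_one (a : ℕ) (ha : 2 ≤ a) (i : Fin 1) :
    RV 1 (a ^ 0) ((1 : Matrix (Fin 1) (Fin 1) ℂ) i) := by
  intro tt
  have htt : (tt : ℕ) = 0 := by
    have h2 : (tt : ℕ) < 1 := by
      have := tt.isLt
      simpa using this
    omega
  have hrhs : cC 1 * eN (a ^ 0) ((tt : ℕ) : ℤ) = 1 := by
    rw [htt, cC]
    push_cast
    rw [eN_zero, Real.sqrt_one]
    norm_num
  have h1 : NC (fun j : Fin 1 => (1 : Matrix (Fin 1) (Fin 1) ℂ) i j = cC 1 * eN (a^0) ((tt:ℕ):ℤ))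
      = NC (fun _ : Fin 1 => True) := NC_congr fun j => by
    rw [hrhs, Subsingleton.elim i j, Matrix.one_apply_eq]
    simp
  rw [h1, NC_true]
  simp

lemma kf_types {a : ℕ} (ha : a.Prime) : ∀ (L : List ℕ) (i : Fin ((L.map (a ^ ·)).prod)),
    ∃ t, t ≤ L.foldr max 0 ∧
      RV ((L.map (a ^ ·)).prod) (a ^ t) (kronFourier (L.map (a ^ ·)) i) := by
  have ha2 : 2 ≤ a := ha.two_le
  have ha0 : a ≠ 0 := ha.ne_zero
  intro L
  induction L with
  | nil =>
    intro i
    exact ⟨0, le_refl 0, rv_one a ha2 i⟩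
  | cons K L ih =>
    intro i
    set P := (L.map (a ^ ·)).prod with hP
    have hPsum : P = a ^ L.sum := prod_map_pow a L
    have hPne : P ≠ 0 := by rw [hPsum]; exact pow_ne_zero _ ha0
    obtain ⟨e, he, hRV1⟩ := fourier_row_pow ha (K := K) (finProdFinEquiv.symm i).1
    obtain ⟨t, ht, hRV2⟩ := ih (finProdFinEquiv.symm i).2
    refine ⟨max e t, ?_, ?_⟩
    · have hfold : (K :: L).foldr max 0 = max K (L.foldr max 0) := rfl
      rw [hfold]
      exact max_le_max he ht
    · have hdvd2 : a ^ t ∣ P := by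
        rw [hPsum]
        exact pow_dvd_pow a (le_trans ht (foldr_max_le_sum L))
      have hk := rv_kron ha2 (pow_ne_zero K ha0) hPne (pow_dvd_pow a he) hdvd2 hRV1 hRV2
      exact hk

/-- row-type counts of `F' = F_{a^{k_{m+1}}} ⊗ F` in terms of those of
the pure ordered FFKP `F`. -/
theorem stmt11 (a : ℕ) (ha : a.Prime) (ks : List ℕ) (hne : ks ≠ [])
    (hk : ∀ k ∈ ks, 1 ≤ k) (hsort : ks.Pairwise (· ≥ ·))
    (K : ℕ) (hK : ks.foldr max 0 ≤ K) :
    (countRows (((K :: ks).map (a ^ ·)).prod) (a ^ 0) (kronFourier ((K :: ks).map (a ^ ·)))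
        = countRows ((ks.map (a ^ ·)).prod) (a ^ 0) (kronFourier (ks.map (a ^ ·)))) ∧
    (∀ k, 1 ≤ k → k ≤ ks.foldr max 0 →
      countRows (((K :: ks).map (a ^ ·)).prod) (a ^ k) (kronFourier ((K :: ks).map (a ^ ·)))
        = a ^ (k - 1) * (a - 1) *
            (∑ t ∈ Finset.range k,
              countRows ((ks.map (a ^ ·)).prod) (a ^ t) (kronFourier (ks.map (a ^ ·))))
          + a ^ k *
              countRows ((ks.map (a ^ ·)).prod) (a ^ k) (kronFourier (ks.map (a ^ ·)))) ∧
    (∀ l, ks.foldr max 0 < l → l ≤ K →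
      countRows (((K :: ks).map (a ^ ·)).prod) (a ^ l) (kronFourier ((K :: ks).map (a ^ ·)))
        = a ^ (l - 1) * (a - 1) * a ^ ks.sum) := by
  have ha2 : 2 ≤ a := ha.two_le
  have ha0 : a ≠ 0 := ha.ne_zero
  have haK : a ^ K ≠ 0 := pow_ne_zero _ ha0
  have hNsum : ((ks.map (a ^ ·)).prod) = a ^ ks.sum := prod_map_pow a ks
  have hNne : ((ks.map (a ^ ·)).prod) ≠ 0 := by rw [hNsum]; exact pow_ne_zero _ ha0
  have hTsum : ks.foldr max 0 ≤ ks.sum := foldr_max_le_sum ks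
  choose τ1 hτ1le hτ1 using fun r : Fin (a ^ K) => fourier_row_pow ha (K := K) r
  choose τ2 hτ2le hτ2 using kf_types ha ks
  have hdvd1 : ∀ r, a ^ (τ1 r) ∣ a ^ K := fun r => pow_dvd_pow a (hτ1le r)
  have hdvd2 : ∀ s, a ^ (τ2 s) ∣ (ks.map (a ^ ·)).prod := fun s => by
    rw [hNsum]; exact pow_dvd_pow a (le_trans (hτ2le s) hTsum)
  have hτ1iff : ∀ r u, RV (a ^ K) (a ^ u) (Fourier (a ^ K) r) ↔ τ1 r = u := by
    intro r u
    constructor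
    · intro h
      exact (rv_unique haK ha2 (hdvd1 r) (hτ1 r) h).symm
    · rintro rfl; exact hτ1 r
  have hτ2iff : ∀ s u, RV ((ks.map (a ^ ·)).prod) (a ^ u) (kronFourier (ks.map (a ^ ·)) s)
      ↔ τ2 s = u := by
    intro s u
    constructor
    · intro h
      exact (rv_unique hNne ha2 (hdvd2 s) (hτ2 s) h).symm
    · rintro rfl; exact hτ2 s
  have hBcount : ∀ u, countRows ((ks.map (a ^ ·)).prod) (a ^ u) (kronFourier (ks.map (a ^ ·)))
      = NC (fun s => τ2 s = u) := by
    intro u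
    rw [countRows_eq_NC]
    exact NC_congr fun s => hτ2iff s u
  -- the gcd structure of τ1
  have hgcd : ∀ r : Fin (a ^ K), Nat.gcd (r : ℕ) (a ^ K) = a ^ (K - τ1 r) := by
    intro r
    have hgd : Nat.gcd (r : ℕ) (a ^ K) ∣ a ^ K := Nat.gcd_dvd_right _ _
    have hg := fourier_row haK r
    obtain ⟨e, he, heq⟩ := (Nat.dvd_prime_pow ha).mp (Nat.div_dvd_of_dvd hgd)
    have hτe : τ1 r = e := by
      rw [← hτ1iff r e, ← heq]
      exact hg
    have hmul : a ^ e * Nat.gcd (r : ℕ) (a ^ K) = a ^ K := by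
      rw [← heq]
      exact Nat.div_mul_cancel hgd
    have hsplit : a ^ e * a ^ (K - e) = a ^ K := by
      rw [← pow_add]; congr 1; omega
    rw [hτe]
    exact Nat.eq_of_mul_eq_mul_left (Nat.pos_of_ne_zero (pow_ne_zero _ ha0))
      (hmul.trans hsplit.symm)
  have hCle : ∀ j, j ≤ K → NC (fun r : Fin (a ^ K) => τ1 r ≤ j) = a ^ j := by
    intro j hj
    have hiff : ∀ r : Fin (a ^ K), (τ1 r ≤ j) ↔ (((r : ℕ) : ZMod (a ^ (K - j))) = 0) := by
      intro r
      rw [ZMod.natCast_eq_zero_iff]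
      constructor
      · intro h
        calc a ^ (K - j) ∣ a ^ (K - τ1 r) := pow_dvd_pow a (by omega)
          _ = Nat.gcd (r : ℕ) (a ^ K) := (hgcd r).symm
          _ ∣ (r : ℕ) := Nat.gcd_dvd_left _ _
      · intro h
        have h2 : a ^ (K - j) ∣ Nat.gcd (r : ℕ) (a ^ K) :=
          Nat.dvd_gcd h (pow_dvd_pow a (by omega))
        rw [hgcd r] at h2
        have h3 := (Nat.pow_dvd_pow_iff_le_right (by omega : 1 < a)).mp h2
        have := hτ1le r
        omega
    rw [NC_congr hiff, NC_fin_mod haK (pow_ne_zero _ ha0)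
      (pow_dvd_pow a (by omega : K - j ≤ K)) 0,
      Nat.pow_div (by omega) (by omega), show K - (K - j) = j by omega]
  have hA0 : NC (fun r : Fin (a ^ K) => τ1 r = 0) = 1 := by
    have h := hCle 0 (by omega)
    rw [NC_congr (fun r => by constructor <;> omega : ∀ r : Fin (a ^ K),
      (τ1 r = 0) ↔ (τ1 r ≤ 0))]
    rw [h, pow_zero]
  have hAj : ∀ j, 1 ≤ j → j ≤ K →
      NC (fun r : Fin (a ^ K) => τ1 r = j) = a ^ (j - 1) * (a - 1) := by
    intro j hj1 hj2
    have h1 := hCle j hj2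
    have h0 := hCle (j - 1) (by omega)
    have hsum : NC (fun r : Fin (a ^ K) => τ1 r ≤ j)
        = NC (fun r : Fin (a ^ K) => τ1 r ≤ j - 1) + NC (fun r : Fin (a ^ K) => τ1 r = j) := by
      rw [NC_congr (fun r => (by constructor <;> omega : (τ1 r ≤ j) ↔ (τ1 r ≤ j - 1 ∨ τ1 r = j)))]
      exact NC_add _ _ (fun r => by omega)
    have hmul : a ^ (j - 1) * a = a ^ j := by
      rw [← pow_succ]; congr 1; omega
    have hfin : a ^ (j - 1) * (a - 1) = a ^ j - a ^ (j - 1) := by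
      rw [Nat.mul_sub, mul_one, hmul]
    omega
  have hAlt : ∀ t, 1 ≤ t → t ≤ K →
      (∑ j ∈ Finset.range t, NC (fun r : Fin (a ^ K) => τ1 r = j)) = a ^ (t - 1) := by
    intro t ht1 ht2
    rw [← NC_lt_sum τ1 t,
      NC_congr (fun r => (by constructor <;> omega : (τ1 r < t) ↔ (τ1 r ≤ t - 1))),
      hCle (t - 1) (by omega)]
  -- master counting formula
  have hMain : ∀ t, countRows (a ^ K * (ks.map (a ^ ·)).prod) (a ^ t)
        (kron (Fourier (a ^ K)) (kronFourier (ks.map (a ^ ·))))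
      = ∑ j ∈ Finset.range (K + 1), NC (fun r : Fin (a ^ K) => τ1 r = j) *
          (if j = t then NC (fun s => τ2 s ≤ t)
            else if j < t then NC (fun s => τ2 s = t) else 0) := by
    intro t
    rw [countRows_eq_NC]
    have hstep1 : NC (fun i : Fin (a ^ K * (ks.map (a ^ ·)).prod) =>
          RV (a ^ K * (ks.map (a ^ ·)).prod) (a ^ t)
            ((kron (Fourier (a ^ K)) (kronFourier (ks.map (a ^ ·)))) i))
        = NC (fun pr : Fin (a ^ K) × Fin ((ks.map (a ^ ·)).prod) =>
            RV (a ^ K * (ks.map (a ^ ·)).prod) (a ^ t)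
              (kronVec (Fourier (a ^ K) pr.1) (kronFourier (ks.map (a ^ ·)) pr.2))) :=
      (NC_congr fun i => Iff.rfl).trans (NC_equiv finProdFinEquiv.symm
        (fun pr : Fin (a ^ K) × Fin ((ks.map (a ^ ·)).prod) =>
          RV (a ^ K * (ks.map (a ^ ·)).prod) (a ^ t)
            (kronVec (Fourier (a ^ K) pr.1) (kronFourier (ks.map (a ^ ·)) pr.2))))
    rw [hstep1]
    have hstep2 : ∀ pr : Fin (a ^ K) × Fin ((ks.map (a ^ ·)).prod),
        RV (a ^ K * (ks.map (a ^ ·)).prod) (a ^ t)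
            (kronVec (Fourier (a ^ K) pr.1) (kronFourier (ks.map (a ^ ·)) pr.2))
          ↔ max (τ1 pr.1) (τ2 pr.2) = t := by
      intro pr
      have hkron := rv_kron ha2 haK hNne (hdvd1 pr.1) (hdvd2 pr.2) (hτ1 pr.1) (hτ2 pr.2)
      have hdvdmax : a ^ (max (τ1 pr.1) (τ2 pr.2)) ∣ a ^ K * (ks.map (a ^ ·)).prod := by
        have hprod : a ^ K * (ks.map (a ^ ·)).prod = a ^ (K + ks.sum) := by
          rw [hNsum, pow_add]
        rw [hprod]
        apply pow_dvd_pow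
        have h1 := hτ1le pr.1
        have h2 := le_trans (hτ2le pr.2) hTsum
        omega
      constructor
      · intro h
        exact (rv_unique (Nat.mul_ne_zero haK hNne) ha2 hdvdmax hkron h).symm
      · intro h
        rw [← h]
        exact hkron
    rw [NC_congr hstep2]
    rw [NC_prod (fun (r : Fin (a ^ K)) (s : Fin ((ks.map (a ^ ·)).prod)) =>
      max (τ1 r) (τ2 s) = t)]
    have hinner : ∀ r : Fin (a ^ K),
        NC (fun s => max (τ1 r) (τ2 s) = t)
          = (if τ1 r = t then NC (fun s => τ2 s ≤ t)
              else if τ1 r < t then NC (fun s => τ2 s = t) else 0) := by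
      intro r
      rcases lt_trichotomy (τ1 r) t with h | h | h
      · rw [if_neg (by omega), if_pos h]
        exact NC_congr fun s => ⟨fun h2 => by omega, fun h2 => by omega⟩
      · rw [if_pos h]
        exact NC_congr fun s => ⟨fun h2 => by omega, fun h2 => by omega⟩
      · rw [if_neg (by omega), if_neg (by omega)]
        exact (NC_congr fun s => ⟨fun h2 => by omega, False.elim⟩).trans NC_false
    rw [Finset.sum_congr rfl (fun r _ => hinner r)]
    rw [sum_comp_group τ1 (K + 1) (fun r => by have := hτ1le r; omega)
      (fun j => if j = t then NC (fun s => τ2 s ≤ t)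
        else if j < t then NC (fun s => τ2 s = t) else 0)]
  refine ⟨?_, ?_, ?_⟩
  · -- k = 0
    show countRows (a ^ K * (ks.map (a ^ ·)).prod) (a ^ 0)
        (kron (Fourier (a ^ K)) (kronFourier (ks.map (a ^ ·))))
      = countRows ((ks.map (a ^ ·)).prod) (a ^ 0) (kronFourier (ks.map (a ^ ·)))
    rw [hMain 0, hBcount 0]
    rw [Finset.sum_eq_single_of_mem 0 (Finset.mem_range.mpr (by omega))
      (fun b _ hb => by rw [if_neg hb, if_neg (by omega), mul_zero])]
    rw [if_pos rfl, hA0, one_mul]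
    exact NC_congr fun s => ⟨fun h => by omega, fun h => by omega⟩
  · -- 1 ≤ k ≤ T
    intro k hk1 hk2
    have hkK : k ≤ K := le_trans hk2 hK
    show countRows (a ^ K * (ks.map (a ^ ·)).prod) (a ^ k)
        (kron (Fourier (a ^ K)) (kronFourier (ks.map (a ^ ·))))
      = a ^ (k - 1) * (a - 1) *
          (∑ t ∈ Finset.range k,
            countRows ((ks.map (a ^ ·)).prod) (a ^ t) (kronFourier (ks.map (a ^ ·))))
        + a ^ k * countRows ((ks.map (a ^ ·)).prod) (a ^ k) (kronFourier (ks.map (a ^ ·)))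
    rw [hMain k, hBcount k,
      Finset.sum_congr rfl (fun u _ => hBcount u)]
    rw [show Finset.range (K + 1) = Finset.Ico 0 (K + 1) from Finset.range_eq_Ico (K+1),
      ← Finset.sum_Ico_consecutive _ (by omega : 0 ≤ k) (by omega : k ≤ K + 1)]
    have hlow : ∑ j ∈ Finset.Ico 0 k, NC (fun r : Fin (a ^ K) => τ1 r = j) *
        (if j = k then NC (fun s => τ2 s ≤ k)
          else if j < k then NC (fun s => τ2 s = k) else 0)
        = a ^ (k - 1) * NC (fun s => τ2 s = k) := by
      rw [Finset.sum_congr rfl (fun j hj => by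
        have hjk : j < k := (Finset.mem_Ico.mp hj).2
        rw [if_neg (by omega), if_pos hjk])]
      rw [← Finset.sum_mul, ← Finset.range_eq_Ico, hAlt k hk1 hkK]
    have hhigh : ∑ j ∈ Finset.Ico k (K + 1), NC (fun r : Fin (a ^ K) => τ1 r = j) *
        (if j = k then NC (fun s => τ2 s ≤ k)
          else if j < k then NC (fun s => τ2 s = k) else 0)
        = a ^ (k - 1) * (a - 1) * NC (fun s => τ2 s ≤ k) := by
      rw [Finset.sum_eq_single_of_mem k (Finset.mem_Ico.mpr ⟨le_refl k, by omega⟩)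
        (fun b hb hbk => by
          have := (Finset.mem_Ico.mp hb).1
          rw [if_neg hbk, if_neg (by omega), mul_zero])]
      rw [if_pos rfl, hAj k hk1 hkK]
    rw [hlow, hhigh]
    have hDsplit : NC (fun s => τ2 s ≤ k)
        = NC (fun s => τ2 s < k) + NC (fun s => τ2 s = k) := by
      rw [NC_congr (fun s => (by constructor <;> omega : (τ2 s ≤ k) ↔ (τ2 s < k ∨ τ2 s = k)))]
      exact NC_add _ _ (fun s => by omega)
    rw [hDsplit, NC_lt_sum τ2 k]
    -- arithmetic
    obtain ⟨b, hb⟩ : ∃ b, a = b + 1 := ⟨a - 1, by omega⟩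
    have hb1 : a - 1 = b := by omega
    have hpow : a ^ (k - 1) * a = a ^ k := by
      rw [← pow_succ]; congr 1; omega
    rw [hb1]
    set S := ∑ j ∈ Finset.range k, NC (fun s => τ2 s = j) with hS
    set B := NC (fun s => τ2 s = k) with hB
    calc a ^ (k - 1) * B + a ^ (k - 1) * b * (S + B)
        = a ^ (k - 1) * b * S + (a ^ (k - 1) * b + a ^ (k - 1)) * B := by ring
      _ = a ^ (k - 1) * b * S + a ^ k * B := by
          congr 1
          rw [show a ^ (k - 1) * b + a ^ (k - 1) = a ^ (k - 1) * (b + 1) by ring, ← hb, hpow]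
  · -- T < l ≤ K
    intro l hl1 hl2
    show countRows (a ^ K * (ks.map (a ^ ·)).prod) (a ^ l)
        (kron (Fourier (a ^ K)) (kronFourier (ks.map (a ^ ·))))
      = a ^ (l - 1) * (a - 1) * a ^ ks.sum
    rw [hMain l]
    have hBzero : NC (fun s => τ2 s = l) = 0 := by
      refine (NC_congr fun s => ⟨fun h => ?_, False.elim⟩).trans NC_false
      have := hτ2le s
      omega
    have hDall : NC (fun s => τ2 s ≤ l) = a ^ ks.sum := by
      have h1 : NC (fun s : Fin ((ks.map (a ^ ·)).prod) => τ2 s ≤ l)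
          = NC (fun _ : Fin ((ks.map (a ^ ·)).prod) => True) := by
        refine NC_congr fun s => ⟨fun _ => trivial, fun _ => ?_⟩
        have := hτ2le s
        omega
      rw [h1, NC_true, Fintype.card_fin, hNsum]
    rw [Finset.sum_eq_single_of_mem l (Finset.mem_range.mpr (by omega))
      (fun b _ hbl => by
        by_cases hblt : b < l
        · rw [if_neg hbl, if_pos hblt, hBzero, mul_zero]
        · rw [if_neg hbl, if_neg hblt, mul_zero])]
    rw [if_pos rfl, hAj l (by omega) hl2, hDall, mul_assoc]
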